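/- Let k ≥ 2 and suppose ψ : (1,∞) → ℝ is nonnegative and bounded on (1,∞), and satisfies ψ(x) = k·x^(-1/k)·((x^(1/k)−1)/(x−1))²·ψ(x^(1/k)) for all x > 1. Then ψ ≡ 0 on (1,∞). -/

import Mathlib

open Real Set
open Filter Topology

theorem stmt_14 (k : ℕ) (hk : 2 ≤ k) (ψ : ℝ → ℝ)
    (hnonneg : ∀ x > (1:ℝ), 0 ≤ ψ x)
    (hbd : ∃ Cb : ℝ, ∀ x > (1:ℝ), ψ x ≤ Cb)
    (heq : ∀ x > (1:ℝ),
        ψ x = (k:ℝ) * x ^ (-(1:ℝ) / k) * ((x ^ ((1:ℝ) / k) - 1) / (x - 1)) ^ 2 *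
          ψ (x ^ ((1:ℝ) / k))) :
    ∀ x > (1:ℝ), ψ x = 0 := by
  obtain ⟨Cb, hCb⟩ := hbd
  have hk0 : (0:ℝ) < k := by exact_mod_cast lt_of_lt_of_le (by norm_num) hk
  have hk1 : (1:ℝ) < k := by exact_mod_cast lt_of_lt_of_le (by norm_num) hk
  -- the multiplier is nonnegative and at most 1/2
  have hmul : ∀ x > (1:ℝ),
      (k:ℝ) * x ^ (-(1:ℝ) / k) * ((x ^ ((1:ℝ) / k) - 1) / (x - 1)) ^ 2 ≤ 1/2 := by
    intro x hx
    have hx0 : (0:ℝ) < x := lt_trans one_pos hx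
    set y := x ^ ((1:ℝ)/k) with hy_def
    have hy1 : 1 < y :=
      (Real.one_lt_rpow_iff_of_pos hx0).mpr (Or.inl ⟨hx, by positivity⟩)
    have hyk : y ^ k = x := by
      rw [hy_def, ← Real.rpow_natCast (x ^ ((1:ℝ)/k)) k, ← Real.rpow_mul hx0.le]
      rw [one_div, inv_mul_cancel₀ (ne_of_gt hk0), Real.rpow_one]
    set S := ∑ i ∈ Finset.range k, y ^ i with hS_def
    have hSk : (k:ℝ) ≤ S := by
      calc (k:ℝ) = ∑ _i ∈ Finset.range k, (1:ℝ) := by simp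
      _ ≤ S := Finset.sum_le_sum fun i _ => one_le_pow₀ hy1.le
    have hS0 : (0:ℝ) < S := lt_of_lt_of_le hk0 hSk
    have hgeom : S * (y - 1) = x - 1 := by
      rw [hS_def, geom_sum_mul, hyk]
    have hfrac : (y - 1)/(x - 1) = 1/S := by
      rw [← hgeom]
      rw [mul_comm]
      rw [show (y-1) = (y-1)*1 by ring, show (y-1)*1*S = (y-1)*S by ring]
      exact mul_div_mul_left 1 S (sub_ne_zero.mpr hy1.ne')
    have ha0 : (0:ℝ) ≤ x ^ (-(1:ℝ)/k) := Real.rpow_nonneg hx0.le _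
    have ha1 : x ^ (-(1:ℝ)/k) ≤ 1 :=
      Real.rpow_le_one_of_one_le_of_nonpos hx.le
        (div_nonpos_of_nonpos_of_nonneg (by norm_num) hk0.le)
    have hb : ((y - 1)/(x - 1))^2 ≤ 1/(k:ℝ)^2 := by
      rw [hfrac]
      rw [div_pow, one_pow]
      apply one_div_le_one_div_of_le (by positivity)
      exact pow_le_pow_left₀ hk0.le hSk 2
    have hb0 : (0:ℝ) ≤ ((y - 1)/(x - 1))^2 := sq_nonneg _
    calc (k:ℝ) * x ^ (-(1:ℝ)/k) * ((y - 1)/(x - 1))^2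
        ≤ (k:ℝ) * 1 * (1/(k:ℝ)^2) := by
          apply mul_le_mul _ hb hb0 (by positivity)
          exact mul_le_mul_of_nonneg_left ha1 hk0.le
      _ = 1/(k:ℝ) := by field_simp
      _ ≤ 1/2 := by
          apply one_div_le_one_div_of_le (by norm_num)
          exact_mod_cast hk
  have hmul0 : ∀ x > (1:ℝ),
      0 ≤ (k:ℝ) * x ^ (-(1:ℝ) / k) * ((x ^ ((1:ℝ) / k) - 1) / (x - 1)) ^ 2 := by
    intro x hx
    have hx0 : (0:ℝ) < x := lt_trans one_pos hx
    have := Real.rpow_nonneg hx0.le (-(1:ℝ)/k)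
    positivity
  -- key iteration bound
  have key : ∀ n : ℕ, ∀ x > (1:ℝ), ψ x ≤ Cb * (1/2)^n := by
    intro n
    induction n with
    | zero => intro x hx; simpa using hCb x hx
    | succ n ih =>
      intro x hx
      have hx0 : (0:ℝ) < x := lt_trans one_pos hx
      have hy1 : 1 < x ^ ((1:ℝ)/k) :=
        (Real.one_lt_rpow_iff_of_pos hx0).mpr (Or.inl ⟨hx, by positivity⟩)
      have hψy0 := hnonneg _ hy1
      have h1 := hmul x hx
      have h2 := hmul0 x hx
      have h3 := ih _ hy1
      have h4 : (0:ℝ) ≤ Cb * (1/2)^n := le_trans hψy0 h3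
      calc ψ x = (k:ℝ) * x ^ (-(1:ℝ) / k) * ((x ^ ((1:ℝ) / k) - 1) / (x - 1)) ^ 2 *
            ψ (x ^ ((1:ℝ) / k)) := heq x hx
        _ ≤ (1/2) * (Cb * (1/2)^n) := mul_le_mul h1 h3 hψy0 (by norm_num)
        _ = Cb * (1/2)^(n+1) := by ring
  intro x hx
  have h0 : Tendsto (fun n : ℕ => Cb * (1/2:ℝ)^n) atTop (𝓝 0) := by
    have := (tendsto_pow_atTop_nhds_zero_of_lt_one (by norm_num : (0:ℝ) ≤ 1/2)
      (by norm_num : (1/2:ℝ) < 1)).const_mul Cb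
    simpa using this
  have hle : ψ x ≤ 0 := ge_of_tendsto' h0 (fun n => key n x hx)
  exact le_antisymm hle (hnonneg x hx)
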